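/- arXiv:2410.04127 — 5 statements merged into one kernel-verified Lean document; each statement's English description precedes it below -/
import Mathlib

section
/- Let X be a finite rack whose proper subrack poset is nonempty, and suppose every maximal proper subrack M of X is stabilized (setwise) by all of Inn(X), i.e., φ_a(M) = M for all a ∈ X. Then every maximal proper subrack of X is the union of all but one of the Inn(X)-orbits of X, and consequently the number of maximal proper subracks equals the number m of Inn(X)-orbits in X. -/
open MulAction Pointwise

/-- `S` is a subrack: every left multiplication by an element of `S` restricts to a
bijection of `S`. -/
def IsSubrack9 {X : Type*} (op : X → X → X) (S : Set X) : Prop :=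
  ∀ a ∈ S, Set.BijOn (op a) S S

/-- `M` is a maximal proper subrack of `X`. -/
def IsMaxProperSubrack9 {X : Type*} (op : X → X → X) (M : Set X) : Prop :=
  IsSubrack9 op M ∧ M ≠ Set.univ ∧
    ∀ S : Set X, IsSubrack9 op S → M ⊂ S → S = Set.univ

/-- The inner automorphism group of the rack `(X, op)`: the subgroup of `Equiv.Perm X`
generated by the left multiplications `φ_a`. -/
def InnRack9 {X : Type*} (op : X → X → X) (hbij : ∀ a : X, Function.Bijective (op a)) :
    Subgroup (Equiv.Perm X) :=
  Subgroup.closure (Set.range fun a => Equiv.ofBijective (op a) (hbij a))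

section Aux

variable {X : Type*}

lemma gen_mem9 (op : X → X → X) (hbij : ∀ a : X, Function.Bijective (op a)) (a : X) :
    Equiv.ofBijective (op a) (hbij a) ∈ InnRack9 op hbij :=
  Subgroup.subset_closure ⟨a, rfl⟩

/-- A set stable under all left multiplications is a subrack. -/
lemma stable_subrack9 (op : X → X → X) (hbij : ∀ a : X, Function.Bijective (op a))
    {S : Set X} (h : ∀ a : X, op a '' S = S) : IsSubrack9 op S := by
  intro a _
  exact ⟨fun x hx => (h a) ▸ Set.mem_image_of_mem _ hx, (hbij a).1.injOn,
    fun x hx => (h a).symm ▸ hx⟩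

/-- Left multiplication maps each orbit onto itself. -/
lemma op_image_orbit9 (op : X → X → X) (hbij : ∀ a : X, Function.Bijective (op a)) (a x : X) :
    op a '' (orbit (InnRack9 op hbij) x : Set X) = orbit (InnRack9 op hbij) x := by
  have hg : (⟨Equiv.ofBijective (op a) (hbij a), gen_mem9 op hbij a⟩ : InnRack9 op hbij) •
      orbit (InnRack9 op hbij) x = orbit (InnRack9 op hbij) x := MulAction.smul_orbit _ _
  have heq : (⟨Equiv.ofBijective (op a) (hbij a), gen_mem9 op hbij a⟩ : InnRack9 op hbij) •
      orbit (InnRack9 op hbij) x = op a '' orbit (InnRack9 op hbij) x := rfl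
  rw [← heq, hg]

/-- A set stable under all left multiplications is stable under all of `Inn(X)`. -/
lemma inn_stable9 (op : X → X → X) (hbij : ∀ a : X, Function.Bijective (op a))
    {M : Set X} (h : ∀ a : X, op a '' M = M) :
    ∀ g ∈ InnRack9 op hbij, (g : Equiv.Perm X) '' M = M := by
  intro g hg
  induction hg using Subgroup.closure_induction with
  | mem x hx =>
    obtain ⟨a, rfl⟩ := hx
    exact h a
  | one => simp
  | mul x y _ _ hx hy =>
    have hc : ⇑(x * y) = ⇑x ∘ ⇑y := rfl
    rw [hc, Set.image_comp, hy, hx]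
  | inv x _ hx =>
    have h2 := congrArg (fun S => (x⁻¹ : Equiv.Perm X) '' S) hx
    simpa [← Set.image_comp] using h2.symm

/-- Orbits avoid a stable set whose complement contains the base point. -/
lemma orbit_subset_compl9 (op : X → X → X) (hbij : ∀ a : X, Function.Bijective (op a))
    {M : Set X} (h : ∀ a : X, op a '' M = M) {x : X} (hx : x ∉ M) :
    (orbit (InnRack9 op hbij) x : Set X) ⊆ Mᶜ := by
  rintro _ ⟨g, rfl⟩ hmem
  apply hx
  have hginv := inn_stable9 op hbij h ((g : Equiv.Perm X)⁻¹) (inv_mem g.2)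
  have hx' : x = ((g : Equiv.Perm X)⁻¹ : Equiv.Perm X) ((g : InnRack9 op hbij) • x) := by
    show x = ((g : Equiv.Perm X)⁻¹ : Equiv.Perm X) ((g : Equiv.Perm X) x)
    simp
  rw [hx', ← hginv]
  exact Set.mem_image_of_mem _ hmem

/-- Every maximal proper subrack (setwise stabilized by left multiplications) is the
complement of an orbit. -/
lemma part1_9 (op : X → X → X) (hbij : ∀ a : X, Function.Bijective (op a))
    (hstab : ∀ M : Set X, IsMaxProperSubrack9 op M → ∀ a : X, op a '' M = M)
    {M : Set X} (hM : IsMaxProperSubrack9 op M) :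
    ∃ x : X, M = (orbit (InnRack9 op hbij) x : Set X)ᶜ := by
  have hMstab := hstab M hM
  obtain ⟨x, hx⟩ : ∃ x, x ∉ M := by
    by_contra h
    push_neg at h
    exact hM.2.1 (Set.eq_univ_of_forall h)
  refine ⟨x, ?_⟩
  set O : Set X := orbit (InnRack9 op hbij) x with hO
  have hsub : IsSubrack9 op (M ∪ O) := by
    apply stable_subrack9 op hbij
    intro a
    rw [Set.image_union, hMstab a, hO, op_image_orbit9 op hbij a x]
  have hssub : M ⊂ M ∪ O :=
    ⟨Set.subset_union_left, fun hle => hx (hle (Or.inr (mem_orbit_self x)))⟩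
  have huniv := hM.2.2 _ hsub hssub
  have h1 : Mᶜ ⊆ O := by
    intro y hy
    have : y ∈ M ∪ O := huniv ▸ Set.mem_univ y
    exact this.resolve_left hy
  have h2 : O ⊆ Mᶜ := orbit_subset_compl9 op hbij hMstab hx
  have hco : Mᶜ = O := Set.Subset.antisymm h1 h2
  rw [← hco, compl_compl]

variable [Fintype X]

/-- Every proper subrack is contained in a maximal proper subrack. -/
lemma exists_maximal9 (op : X → X → X) {S : Set X} (hS : IsSubrack9 op S)
    (hSne : S ≠ Set.univ) :
    ∃ M : Set X, IsMaxProperSubrack9 op M ∧ S ⊆ M := by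
  have hfin : ({T : Set X | IsSubrack9 op T ∧ T ≠ Set.univ ∧ S ⊆ T}).Finite :=
    Set.toFinite _
  obtain ⟨M, hMmem, hMmax⟩ :=
    Set.Finite.exists_maximalFor id _ hfin ⟨S, hS, hSne, subset_rfl⟩
  refine ⟨M, ⟨hMmem.1, hMmem.2.1, ?_⟩, hMmem.2.2⟩
  intro T hT hMT
  by_contra hTuniv
  have hMeq : M = T := hMT.1.antisymm (hMmax ⟨hT, hTuniv, hMmem.2.2.trans hMT.1⟩ hMT.1)
  exact hMT.2 (hMeq ▸ subset_rfl)

/-- The complement of any orbit is a maximal proper subrack. -/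
lemma compl_orbit_max9 (op : X → X → X) (hbij : ∀ a : X, Function.Bijective (op a))
    (hstab : ∀ M : Set X, IsMaxProperSubrack9 op M → ∀ a : X, op a '' M = M)
    (x : X) : IsMaxProperSubrack9 op ((orbit (InnRack9 op hbij) x : Set X)ᶜ) := by
  set O : Set X := orbit (InnRack9 op hbij) x with hO
  have hsub : IsSubrack9 op Oᶜ := by
    apply stable_subrack9 op hbij
    intro a
    rw [Set.image_compl_eq (hbij a), hO, op_image_orbit9 op hbij a x]
  refine ⟨hsub, ?_, ?_⟩
  · intro h
    have hx : x ∈ Oᶜ := h ▸ Set.mem_univ x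
    exact hx (mem_orbit_self x)
  · intro S hS hOS
    by_contra hSuniv
    obtain ⟨M, hM, hSM⟩ := exists_maximal9 op hS hSuniv
    obtain ⟨y, hy⟩ := part1_9 op hbij hstab hM
    have hOy : orbit (InnRack9 op hbij) y ⊆ O := by
      have h1 : Oᶜ ⊆ M := hOS.1.trans hSM
      have h2 := Set.compl_subset_compl.mpr h1
      rwa [hy, compl_compl, compl_compl] at h2
    have horb : orbit (InnRack9 op hbij) y = O :=
      MulAction.orbit_eq_iff.mpr (hOy (mem_orbit_self y))
    have hMO : M = Oᶜ := by rw [hy, horb]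
    exact hOS.2 (hSM.trans hMO.le)

end Aux

/-- Let `X` be a finite rack with a nonempty proper subrack poset such
that every maximal proper subrack is setwise stabilized by all of `Inn(X)`.  Then every
maximal proper subrack is the union of all but one `Inn(X)`-orbit (i.e. the complement
of a single orbit), and the number of maximal proper subracks equals the number `m` of
`Inn(X)`-orbits in `X`. -/
theorem stmt_9 {X : Type*} [Fintype X] (op : X → X → X)
    (hbij : ∀ a : X, Function.Bijective (op a))
    (hA1 : ∀ a b c : X, op a (op b c) = op (op a b) (op a c))
    (hne : ∃ S : Set X, IsSubrack9 op S ∧ S ≠ ∅ ∧ S ≠ Set.univ)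
    (hstab : ∀ M : Set X, IsMaxProperSubrack9 op M → ∀ a : X, op a '' M = M) :
    (∀ M : Set X, IsMaxProperSubrack9 op M →
      ∃ x : X, M = (MulAction.orbit (InnRack9 op hbij) x : Set X)ᶜ) ∧
    Nat.card {M : Set X // IsMaxProperSubrack9 op M} =
      Nat.card (MulAction.orbitRel.Quotient (InnRack9 op hbij) X) := by
  constructor
  · exact fun M hM => part1_9 op hbij hstab hM
  · symm
    refine Nat.card_eq_of_bijective
      (Quotient.lift (fun x => (⟨(MulAction.orbit (InnRack9 op hbij) x : Set X)ᶜ,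
          compl_orbit_max9 op hbij hstab x⟩ : {M : Set X // IsMaxProperSubrack9 op M}))
        ?_) ⟨?_, ?_⟩
    · intro a b hab
      have horb : MulAction.orbit (InnRack9 op hbij) a = MulAction.orbit (InnRack9 op hbij) b :=
        MulAction.orbit_eq_iff.mpr (MulAction.orbitRel_apply.mp hab)
      simp only [horb]
    · intro q1 q2 h
      induction q1 using Quotient.inductionOn' with
      | h a =>
        induction q2 using Quotient.inductionOn' with
        | h b =>
          simp only [Quotient.lift_mk, Subtype.mk_eq_mk] at h
          have h' : MulAction.orbit (InnRack9 op hbij) a =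
              MulAction.orbit (InnRack9 op hbij) b := by
            have hc := congrArg compl h
            simpa using hc
          exact Quotient.sound' (MulAction.orbitRel_apply.mpr
            (h' ▸ MulAction.mem_orbit_self a))
    · rintro ⟨M, hM⟩
      obtain ⟨x, hx⟩ := part1_9 op hbij hstab hM
      exact ⟨Quotient.mk'' x, by simp [hx]⟩
end

section
/- Let G be a finite group and X ⊆ G a conjugation rack (a subset closed under conjugation, with operation a ▷ b = a*b*a⁻¹). Let Z = X ∩ Z(G). Suppose Z and Y := X \ Z are both nonempty. Then the map S ↦ (S ∩ Y, S ∩ Z) is a lattice isomorphism from the subrack lattice R(X) to the product R(Y) × R(Z). -/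
/-- `S` is a subrack of the conjugation rack `X ⊆ G`: `S ⊆ X` and `S` is closed under
conjugation by its own elements. -/
def IsSubrackOf11 {G : Type*} [Group G] (X S : Set G) : Prop :=
  S ⊆ X ∧ ∀ a ∈ S, ∀ b ∈ S, a * b * a⁻¹ ∈ S

/-- Let `G` be a finite group, `X ⊆ G` a conjugation rack,
`Z = X ∩ Z(G)` and `Y = X \ Z`, both nonempty.  Then `S ↦ (S ∩ Y, S ∩ Z)` is a lattice
(order) isomorphism from the subrack lattice `R(X)` onto `R(Y) × R(Z)`. -/
theorem stmt_11 {G : Type*} [Group G] [Fintype G] (X : Set G)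
    (hX : ∀ a ∈ X, ∀ g : G, g * a * g⁻¹ ∈ X)
    (hZ : (X ∩ (Subgroup.center G : Set G)).Nonempty)
    (hY : (X \ (X ∩ (Subgroup.center G : Set G))).Nonempty) :
    ∃ e : {S : Set G // IsSubrackOf11 X S} ≃o
        ({S : Set G // IsSubrackOf11 (X \ (X ∩ (Subgroup.center G : Set G))) S} ×
         {S : Set G // IsSubrackOf11 (X ∩ (Subgroup.center G : Set G)) S}),
      ∀ S : {S : Set G // IsSubrackOf11 X S},
        ((e S).1 : Set G) = ↑S ∩ (X \ (X ∩ (Subgroup.center G : Set G))) ∧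
        ((e S).2 : Set G) = ↑S ∩ (X ∩ (Subgroup.center G : Set G)) := by
  classical
  set Z : Set G := X ∩ (Subgroup.center G : Set G) with hZdef
  set Y : Set G := X \ Z with hYdef
  have hZsub : Z ⊆ X := Set.inter_subset_left
  have hYsub : Y ⊆ X := Set.diff_subset
  have hYZ : Y ∪ Z = X := Set.diff_union_of_subset hZsub
  -- conjugation fixes central elements, and conjugation by central elements is trivial
  have hcentral : ∀ a b : G, b ∈ Subgroup.center G → a * b * a⁻¹ = b := by
    intro a b hb
    have h := (Subgroup.mem_center_iff.mp hb) a
    rw [h, mul_assoc, mul_inv_cancel, mul_one]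
  have hcentral' : ∀ a b : G, a ∈ Subgroup.center G → a * b * a⁻¹ = b := by
    intro a b ha
    have h := (Subgroup.mem_center_iff.mp ha) b
    rw [← h, mul_assoc, mul_inv_cancel, mul_one]
  have hconjY : ∀ a : G, ∀ b ∈ Y, a * b * a⁻¹ ∈ Y := by
    intro a b hb
    refine ⟨hX b hb.1 a, ?_⟩
    rintro ⟨-, hc⟩
    apply hb.2
    refine ⟨hb.1, ?_⟩
    have : a⁻¹ * (a * b * a⁻¹) * a⁻¹⁻¹ ∈ Subgroup.center G :=
      Subgroup.Normal.conj_mem inferInstance _ hc a⁻¹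
    simpa [mul_assoc] using this
  have hfwdY : ∀ S : Set G, IsSubrackOf11 X S → IsSubrackOf11 Y (S ∩ Y) := by
    intro S hS
    refine ⟨Set.inter_subset_right, ?_⟩
    rintro a ⟨haS, haY⟩ b ⟨hbS, hbY⟩
    exact ⟨hS.2 a haS b hbS, hconjY a b hbY⟩
  have hfwdZ : ∀ S : Set G, IsSubrackOf11 X S → IsSubrackOf11 Z (S ∩ Z) := by
    intro S hS
    refine ⟨Set.inter_subset_right, ?_⟩
    rintro a ⟨haS, haZ⟩ b ⟨hbS, hbZ⟩
    rw [hcentral a b hbZ.2]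
    exact ⟨hbS, hbZ⟩
  have hback : ∀ A B : Set G, IsSubrackOf11 Y A → IsSubrackOf11 Z B →
      IsSubrackOf11 X (A ∪ B) := by
    intro A B hA hB
    refine ⟨Set.union_subset (hA.1.trans hYsub) (hB.1.trans hZsub), ?_⟩
    rintro a (haA | haB) b (hbA | hbB)
    · exact Or.inl (hA.2 a haA b hbA)
    · rw [hcentral a b (hB.1 hbB).2]; exact Or.inr hbB
    · rw [hcentral' a b (hB.1 haB).2]; exact Or.inl hbA
    · rw [hcentral' a b (hB.1 haB).2]; exact Or.inr hbB
  -- set-level identities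
  have hsplit : ∀ S : Set G, S ⊆ X → S ∩ Y ∪ S ∩ Z = S := by
    intro S hS
    rw [← Set.inter_union_distrib_left, hYZ, Set.inter_eq_left.mpr hS]
  have hAY : ∀ A B : Set G, A ⊆ Y → B ⊆ Z → (A ∪ B) ∩ Y = A := by
    intro A B hA hB
    rw [Set.union_inter_distrib_right, Set.inter_eq_left.mpr hA,
      Set.union_eq_left]
    rintro x ⟨hxB, hxY⟩
    exact absurd (hB hxB) hxY.2
  have hBZ : ∀ A B : Set G, A ⊆ Y → B ⊆ Z → (A ∪ B) ∩ Z = B := by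
    intro A B hA hB
    rw [Set.union_inter_distrib_right, Set.inter_eq_left.mpr hB,
      Set.union_eq_right]
    rintro x ⟨hxA, hxZ⟩
    exact absurd hxZ (hA hxA).2
  refine ⟨⟨⟨fun S => (⟨S.1 ∩ Y, hfwdY S.1 S.2⟩, ⟨S.1 ∩ Z, hfwdZ S.1 S.2⟩),
      fun p => ⟨p.1.1 ∪ p.2.1, hback _ _ p.1.2 p.2.2⟩, ?_, ?_⟩, ?_⟩, fun S => ⟨rfl, rfl⟩⟩
  · intro S
    exact Subtype.ext (hsplit S.1 S.2.1)
  · rintro ⟨A, B⟩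
    exact Prod.ext (Subtype.ext (hAY A.1 B.1 A.2.1 B.2.1))
      (Subtype.ext (hBZ A.1 B.1 A.2.1 B.2.1))
  · intro S T
    constructor
    · rintro ⟨h1, h2⟩
      have : (S.1 ∩ Y) ∪ (S.1 ∩ Z) ⊆ (T.1 ∩ Y) ∪ (T.1 ∩ Z) := Set.union_subset_union h1 h2
      rw [hsplit S.1 S.2.1, hsplit T.1 T.2.1] at this
      exact this
    · intro h
      exact ⟨Set.inter_subset_inter_left _ h, Set.inter_subset_inter_left _ h⟩
end

section
/- Let G be a finite group, X ⊆ G a conjugation rack, and Z = X ∩ Z(G) with both Z and X \ Z nonempty. Then the reduced Euler characteristic of the order complex of the poset of nonempty proper subracks of X equals (-1)^|Z| times the reduced Euler characteristic of the order complex of the poset of nonempty proper subracks of X \ Z. -/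
/-- `S` is a subrack of the conjugation rack `X ⊆ G`. -/
def IsSubrackOf13 {G : Type*} [Group G] (X S : Set G) : Prop :=
  S ⊆ X ∧ ∀ a ∈ S, ∀ b ∈ S, a * b * a⁻¹ ∈ S

/-- The reduced Euler characteristic of the order complex of a finite poset `α`:
the sum of `(-1)^(|C| - 1)` over all chains `C` of `α` (including the empty chain). -/
noncomputable def redEuler13 (α : Type*) [Finite α] [PartialOrder α] : ℤ :=
  letI := Fintype.ofFinite α
  letI := Classical.decPred fun C : Finset α => IsChain (· ≤ ·) (C : Set α)
  ∑ C ∈ Finset.univ.powerset.filter (fun C : Finset α => IsChain (· ≤ ·) (C : Set α)),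
    (-1 : ℤ) ^ (C.card + 1)

open Finset
section CF
variable {α : Type*} [Finite α] [PartialOrder α]

noncomputable def chainsBtw (x y : α) : Finset (Finset α) :=
  letI := Fintype.ofFinite α
  letI := Classical.decPred fun C : Finset α =>
    IsChain (· ≤ ·) (C : Set α) ∧ x ∈ C ∧ y ∈ C ∧ ∀ a ∈ C, x ≤ a ∧ a ≤ y
  Finset.univ.powerset.filter fun C : Finset α =>
    IsChain (· ≤ ·) (C : Set α) ∧ x ∈ C ∧ y ∈ C ∧ ∀ a ∈ C, x ≤ a ∧ a ≤ y

lemma mem_chainsBtw {x y : α} {C : Finset α} :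
    C ∈ chainsBtw x y ↔
      IsChain (· ≤ ·) (C : Set α) ∧ x ∈ C ∧ y ∈ C ∧ ∀ a ∈ C, x ≤ a ∧ a ≤ y := by
  letI := Fintype.ofFinite α
  simp [chainsBtw]

noncomputable def cf (x y : α) : ℤ :=
  ∑ C ∈ chainsBtw x y, (-1 : ℤ) ^ C.card

/-- the closed interval as a finset -/
lemma chainsBtw_self (x : α) : chainsBtw x x = {{x}} := by
  ext C
  simp only [mem_chainsBtw, mem_singleton]
  constructor
  · rintro ⟨-, hx, -, hb⟩
    ext a
    simp only [mem_singleton]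
    constructor
    · intro ha; exact le_antisymm (hb a ha).2 (hb a ha).1
    · rintro rfl; exact hx
  · rintro rfl
    refine ⟨?_, by simp, by simp, by simp⟩
    simp [Set.Subsingleton.isChain, Set.subsingleton_singleton]

lemma cf_self (x : α) : cf x x = -1 := by
  simp [cf, chainsBtw_self]

noncomputable def intv (x y : α) : Finset α :=
  letI := Fintype.ofFinite α
  letI := Classical.decPred fun z : α => x ≤ z ∧ z ≤ y
  Finset.univ.filter fun z => x ≤ z ∧ z ≤ y

lemma mem_intv {x y z : α} : z ∈ intv x y ↔ x ≤ z ∧ z ≤ y := by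
  letI := Fintype.ofFinite α
  simp [intv]

/-- the half-open interval (x,y] as a finset -/
noncomputable def intvo (x y : α) : Finset α :=
  letI := Fintype.ofFinite α
  letI := Classical.decPred fun z : α => x < z ∧ z ≤ y
  Finset.univ.filter fun z => x < z ∧ z ≤ y

lemma mem_intvo {x y z : α} : z ∈ intvo x y ↔ x < z ∧ z ≤ y := by
  letI := Fintype.ofFinite α
  simp [intvo]

lemma cf_step (x y : α) (h : x < y) :
    cf x y = -∑ z ∈ intvo x y, cf z y := by
  classical
  have key : ∑ p ∈ (intvo x y).sigma (fun z => chainsBtw z y),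
      (-(-1 : ℤ) ^ p.2.card) = ∑ C ∈ chainsBtw x y, (-1 : ℤ) ^ C.card := by
    refine Finset.sum_bij (fun p _ => insert x p.2) ?_ ?_ ?_ ?_
    · rintro ⟨z, C⟩ hp
      rw [Finset.mem_sigma] at hp
      obtain ⟨hz, hC⟩ := hp
      rw [mem_intvo] at hz
      rw [mem_chainsBtw] at hC ⊢
      obtain ⟨hchain, hzC, hyC, hbd⟩ := hC
      refine ⟨?_, by simp, by simp [hyC], ?_⟩
      · rw [Finset.coe_insert]
        refine hchain.insert fun b hb _ => ?_
        exact Or.inl (le_trans hz.1.le (hbd b hb).1)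
      · intro a ha
        rcases Finset.mem_insert.mp ha with rfl | ha
        · exact ⟨le_refl _, h.le⟩
        · exact ⟨le_trans hz.1.le (hbd a ha).1, (hbd a ha).2⟩
    · rintro ⟨z, C⟩ hp ⟨w, D⟩ hq heq
      rw [Finset.mem_sigma] at hp hq
      obtain ⟨hz, hC⟩ := hp
      obtain ⟨hw, hD⟩ := hq
      dsimp only at hz hC hw hD heq
      rw [mem_intvo] at hz hw
      rw [mem_chainsBtw] at hC hD
      have hxC : x ∉ C := fun hx => absurd (hC.2.2.2 x hx).1 (not_le_of_gt hz.1)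
      have hxD : x ∉ D := fun hx => absurd (hD.2.2.2 x hx).1 (not_le_of_gt hw.1)
      have hCD : C = D := by
        have := congrArg (fun s => Finset.erase s x) heq
        simpa [Finset.erase_insert hxC, Finset.erase_insert hxD] using this
      subst hCD
      have hzw : z = w :=
        le_antisymm (hC.2.2.2 w hD.2.1).1 (hD.2.2.2 z hC.2.1).1
      subst hzw; rfl
    · intro C hC
      rw [mem_chainsBtw] at hC
      obtain ⟨hchain, hxC, hyC, hbd⟩ := hC
      have hne : (C.erase x).Nonempty := ⟨y, Finset.mem_erase.mpr ⟨h.ne', hyC⟩⟩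
      obtain ⟨m, hm, hmin⟩ : ∃ m ∈ C.erase x, ∀ b ∈ C.erase x, ¬ b < m := by
        obtain ⟨m, hm⟩ := exists_minimal_of_wellFoundedLT (· ∈ C.erase x) hne
        exact ⟨m, hm.prop, fun b hb hlt => hm.not_lt hb hlt⟩
      have hmC : m ∈ C := Finset.mem_of_mem_erase hm
      have hmx : m ≠ x := (Finset.mem_erase.mp hm).1
      have hleast : ∀ b ∈ C.erase x, m ≤ b := by
        intro b hb
        by_cases hbm : b = m
        · exact hbm.ge
        · rcases hchain (Finset.mem_coe.mpr hmC) (Finset.mem_coe.mpr (Finset.mem_of_mem_erase hb))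
            (fun e => hbm e.symm) with h1 | h1
          · exact h1
          · exact absurd (lt_of_le_of_ne h1 hbm) (hmin b hb)
      refine ⟨⟨m, C.erase x⟩, ?_, ?_⟩
      · rw [Finset.mem_sigma, mem_intvo, mem_chainsBtw]
        refine ⟨⟨lt_of_le_of_ne (hbd m hmC).1 (Ne.symm hmx), (hbd m hmC).2⟩,
          hchain.mono ?_, hm, Finset.mem_erase.mpr ⟨h.ne', hyC⟩, ?_⟩
        · exact_mod_cast Finset.coe_subset.mpr (Finset.erase_subset _ _)
        · intro a ha
          exact ⟨hleast a ha, (hbd a (Finset.mem_of_mem_erase ha)).2⟩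
      · exact Finset.insert_erase hxC
    · rintro ⟨z, C⟩ hp
      rw [Finset.mem_sigma] at hp
      obtain ⟨hz, hC⟩ := hp
      dsimp only at hz hC ⊢
      rw [mem_intvo] at hz
      rw [mem_chainsBtw] at hC
      have hxC : x ∉ C := fun hx => absurd (hC.2.2.2 x hx).1 (not_le_of_gt hz.1)
      rw [Finset.card_insert_of_notMem hxC, pow_succ]
      ring
  have h2 : ∑ p ∈ (intvo x y).sigma (fun z => chainsBtw z y), ((-1 : ℤ) ^ p.2.card)
      = ∑ z ∈ intvo x y, cf z y := by
    rw [Finset.sum_sigma]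
    rfl
  calc cf x y = ∑ p ∈ (intvo x y).sigma (fun z => chainsBtw z y), (-(-1 : ℤ) ^ p.2.card) :=
        key.symm
    _ = -∑ p ∈ (intvo x y).sigma (fun z => chainsBtw z y), ((-1 : ℤ) ^ p.2.card) :=
        (Finset.sum_neg_distrib _)
    _ = -∑ z ∈ intvo x y, cf z y := by rw [h2]

lemma cf_rec (x y : α) (h : x < y) :
    ∑ z ∈ intv x y, cf z y = 0 := by
  classical
  have hx : x ∉ intvo x y := by simp [mem_intvo]
  have : intv x y = insert x (intvo x y) := by
    ext z
    simp only [mem_intv, Finset.mem_insert, mem_intvo]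
    constructor
    · rintro ⟨h1, h2⟩
      rcases eq_or_lt_of_le h1 with rfl | h1
      · exact Or.inl rfl
      · exact Or.inr ⟨h1, h2⟩
    · rintro (rfl | ⟨h1, h2⟩)
      · exact ⟨le_refl _, h.le⟩
      · exact ⟨h1.le, h2⟩
  rw [this, Finset.sum_insert hx, cf_step x y h]
  ring


lemma intv_eq_insert [DecidableEq α] {x y : α} (h : x < y) : intv x y = insert x (intvo x y) := by
  ext z
  simp only [mem_intv, Finset.mem_insert, mem_intvo]
  constructor
  · rintro ⟨h1, h2⟩
    rcases eq_or_lt_of_le h1 with rfl | h1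
    · exact Or.inl rfl
    · exact Or.inr ⟨h1, h2⟩
  · rintro (rfl | ⟨h1, h2⟩)
    · exact ⟨le_refl _, h.le⟩
    · exact ⟨h1.le, h2⟩

lemma x_not_mem_intvo {x y : α} : x ∉ intvo x y := by simp [mem_intvo]

lemma cf_unique (y : α) (g : α → ℤ) (hy : g y = -1)
    (hrec : ∀ x, x < y → ∑ z ∈ intv x y, g z = 0) :
    ∀ x, x ≤ y → g x = cf x y := by
  classical
  have wf : WellFounded ((· > ·) : α → α → Prop) := IsWellFounded.wf
  intro x
  refine wf.induction (C := fun x => x ≤ y → g x = cf x y) x ?_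
  intro x ih hxy
  rcases eq_or_lt_of_le hxy with rfl | hlt
  · rw [hy, cf_self]
  · have h1 := hrec x hlt
    have h2 := cf_rec x y hlt
    rw [intv_eq_insert hlt, Finset.sum_insert x_not_mem_intvo] at h1 h2
    have h3 : ∑ z ∈ intvo x y, g z = ∑ z ∈ intvo x y, cf z y := by
      refine Finset.sum_congr rfl fun z hz => ?_
      rw [mem_intvo] at hz
      exact ih z hz.1 hz.2
    rw [h3] at h1
    linarith

lemma cf_prod {β : Type*} [Finite β] [PartialOrder β] (x y : α) (u v : β)
    (hxy : x ≤ y) (huv : u ≤ v) :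
    cf (α := α × β) (x, u) (y, v) = -(cf x y * cf u v) := by
  classical
  refine (cf_unique ((y, v) : α × β) (fun p => -(cf p.1 y * cf p.2 v)) ?_ ?_ (x, u)
    (Prod.mk_le_mk.mpr ⟨hxy, huv⟩)).symm
  · simp [cf_self]
  · intro p hp
    have hsplit : intv p ((y, v) : α × β) = (intv p.1 y) ×ˢ (intv p.2 v) := by
      ext z
      simp only [mem_intv, Finset.mem_product, Prod.le_def]
      tauto
    rw [hsplit, Finset.sum_product]
    have heq : ∀ z1 ∈ intv p.1 y, ∑ z2 ∈ intv p.2 v, -(cf z1 y * cf z2 v)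
        = -(cf z1 y * ∑ z2 ∈ intv p.2 v, cf z2 v) := by
      intro z1 _
      rw [Finset.mul_sum, ← Finset.sum_neg_distrib]
    rw [Finset.sum_congr rfl heq, Finset.sum_neg_distrib, ← Finset.sum_mul]
    have hne : p ≠ (y, v) := ne_of_lt hp
    rcases lt_or_eq_of_le hp.le.1 with h1 | h1
    · rw [cf_rec p.1 y h1]
      ring
    · have h2 : p.2 < v := by
        rcases lt_or_eq_of_le hp.le.2 with h2 | h2
        · exact h2
        · exact absurd (Prod.ext h1 h2) hne
      rw [cf_rec p.2 v h2]
      ring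

lemma cf_boolean {S : Type*} [Fintype S] [DecidableEq S] (A : Finset S) :
    cf A (Finset.univ : Finset S) = -(-1 : ℤ) ^ (Aᶜ).card := by
  refine (cf_unique (Finset.univ : Finset S) (fun B => -(-1 : ℤ) ^ (Bᶜ).card) ?_ ?_ A
    (Finset.subset_univ A)).symm
  · simp
  · intro B hB
    have h1 : ∑ C ∈ intv B Finset.univ, -(-1 : ℤ) ^ (Cᶜ).card
        = ∑ D ∈ (Bᶜ).powerset, -(-1 : ℤ) ^ D.card := by
      refine Finset.sum_nbij' (fun C => Cᶜ) (fun D => Dᶜ) ?_ ?_ ?_ ?_ ?_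
      · intro C hC
        rw [mem_intv] at hC
        rw [Finset.mem_powerset]
        exact Finset.compl_subset_compl.mpr hC.1
      · intro D hD
        rw [Finset.mem_powerset] at hD
        rw [mem_intv]
        exact ⟨Finset.subset_compl_comm.mp hD, Finset.subset_univ _⟩
      · intro C _; simp
      · intro D _; simp
      · intro C _; rfl
    rw [h1, Finset.sum_neg_distrib, Finset.sum_powerset_neg_one_pow_card]
    have hne : Bᶜ ≠ ∅ := by
      intro h
      rw [Finset.compl_eq_empty_iff] at h
      exact absurd h (ne_of_lt hB)
    simp [hne]

lemma cf_congr {β : Type*} [Finite β] [PartialOrder β] (e : α ≃o β) (x y : α) :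
    cf x y = cf (e x) (e y) := by
  classical
  unfold cf
  refine Finset.sum_nbij' (fun C => C.image e) (fun D => D.image e.symm) ?_ ?_ ?_ ?_ ?_
  · intro C hC
    rw [mem_chainsBtw] at hC ⊢
    obtain ⟨hchain, hx, hy, hbd⟩ := hC
    refine ⟨?_, Finset.mem_image_of_mem _ hx, Finset.mem_image_of_mem _ hy, ?_⟩
    · rw [Finset.coe_image]
      exact hchain.image_of_map_rel _ _ _ (fun a b hab => e.monotone hab)
    · intro a ha
      obtain ⟨c, hc, rfl⟩ := Finset.mem_image.mp ha
      exact ⟨e.le_iff_le.mpr (hbd c hc).1, e.le_iff_le.mpr (hbd c hc).2⟩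
  · intro D hD
    rw [mem_chainsBtw] at hD ⊢
    obtain ⟨hchain, hx, hy, hbd⟩ := hD
    refine ⟨?_, ?_, ?_, ?_⟩
    · rw [Finset.coe_image]
      exact hchain.image_of_map_rel _ _ _ (fun a b hab => e.symm.monotone hab)
    · have := Finset.mem_image_of_mem e.symm hx
      simpa using this
    · have := Finset.mem_image_of_mem e.symm hy
      simpa using this
    · intro a ha
      obtain ⟨c, hc, rfl⟩ := Finset.mem_image.mp ha
      constructor
      · have := (hbd c hc).1
        rw [← e.symm.le_iff_le] at this
        simpa using this
      · have := (hbd c hc).2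
        rw [← e.symm.le_iff_le] at this
        simpa using this
  · intro C _
    rw [Finset.image_image]
    have : ⇑e.symm ∘ ⇑e = id := by ext a; simp
    rw [this, Finset.image_id]
  · intro D _
    rw [Finset.image_image]
    have : ⇑e ∘ ⇑e.symm = id := by ext a; simp
    rw [this, Finset.image_id]
  · intro C _
    rw [Finset.card_image_of_injective _ e.injective]


lemma redEuler_congr {β : Type*} [Finite β] [PartialOrder β] (e : α ≃o β) :
    redEuler13 α = redEuler13 β := by
  classical
  letI := Fintype.ofFinite α
  letI := Fintype.ofFinite β
  unfold redEuler13
  refine Finset.sum_nbij' (fun C => C.image e) (fun D => D.image e.symm) ?_ ?_ ?_ ?_ ?_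
  · intro C hC
    simp only [Finset.mem_filter, Finset.mem_powerset] at hC ⊢
    refine ⟨Finset.subset_univ _, ?_⟩
    rw [Finset.coe_image]
    exact hC.2.image_of_map_rel _ _ _ (fun a b hab => e.monotone hab)
  · intro D hD
    simp only [Finset.mem_filter, Finset.mem_powerset] at hD ⊢
    refine ⟨Finset.subset_univ _, ?_⟩
    rw [Finset.coe_image]
    exact hD.2.image_of_map_rel _ _ _ (fun a b hab => e.symm.monotone hab)
  · intro C _
    rw [Finset.image_image]
    have : ⇑e.symm ∘ ⇑e = id := by ext a; simp
    rw [this, Finset.image_id]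
  · intro D _
    rw [Finset.image_image]
    have : ⇑e ∘ ⇑e.symm = id := by ext a; simp
    rw [this, Finset.image_id]
  · intro C _
    rw [Finset.card_image_of_injective _ e.injective]

lemma redEuler_proper (b t : α) (hbt : b ≠ t) (hb : ∀ a, b ≤ a) (ht : ∀ a, a ≤ t) :
    redEuler13 {a : α // a ≠ b ∧ a ≠ t} = -cf b t := by
  classical
  letI := Fintype.ofFinite α
  letI := Fintype.ofFinite {a : α // a ≠ b ∧ a ≠ t}
  unfold redEuler13 cf
  rw [← Finset.sum_neg_distrib]
  refine Finset.sum_nbij' (fun D => insert b (insert t (D.image Subtype.val)))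
    (fun C => C.subtype fun a => a ≠ b ∧ a ≠ t) ?_ ?_ ?_ ?_ ?_
  · intro D hD
    simp only [Finset.mem_filter, Finset.mem_powerset] at hD
    rw [mem_chainsBtw]
    refine ⟨?_, Finset.mem_insert_self _ _,
      Finset.mem_insert_of_mem (Finset.mem_insert_self _ _), fun a _ => ⟨hb a, ht a⟩⟩
    rw [Finset.coe_insert, Finset.coe_insert, Finset.coe_image]
    have h1 : IsChain (· ≤ ·) (Subtype.val '' (D : Set {a : α // a ≠ b ∧ a ≠ t})) :=
      hD.2.image_of_map_rel (· ≤ ·) (· ≤ ·) Subtype.val (fun a c hac => hac)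
    have h2 : IsChain (· ≤ ·)
        (insert t (Subtype.val '' (D : Set {a : α // a ≠ b ∧ a ≠ t}))) :=
      h1.insert fun c _ _ => Or.inr (ht c)
    exact h2.insert fun c _ _ => Or.inl (hb c)
  · intro C hC
    rw [mem_chainsBtw] at hC
    simp only [Finset.mem_filter, Finset.mem_powerset]
    refine ⟨Finset.subset_univ _, ?_⟩
    intro a ha c hc hne
    rw [Finset.mem_coe, Finset.mem_subtype] at ha hc
    have hac : (a : α) ≠ (c : α) := fun h => hne (Subtype.ext h)
    exact hC.1 (Finset.mem_coe.mpr ha) (Finset.mem_coe.mpr hc) hac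
  · intro D hD
    ext ⟨a, ha⟩
    rw [Finset.mem_subtype]
    simp only [Finset.mem_insert, Finset.mem_image]
    constructor
    · rintro (rfl | rfl | ⟨c, hc, rfl⟩)
      · exact absurd rfl ha.1
      · exact absurd rfl ha.2
      · rwa [show c = ⟨(c : α), c.2⟩ from Subtype.ext rfl] at hc
    · intro h
      exact Or.inr (Or.inr ⟨⟨a, ha⟩, h, rfl⟩)
  · intro C hC
    rw [mem_chainsBtw] at hC
    ext a
    simp only [Finset.mem_insert, Finset.mem_image]
    constructor
    · rintro (rfl | rfl | ⟨c, hc, rfl⟩)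
      · exact hC.2.1
      · exact hC.2.2.1
      · exact Finset.mem_subtype.mp hc
    · intro haC
      by_cases h1 : a = b
      · exact Or.inl h1
      by_cases h2 : a = t
      · exact Or.inr (Or.inl h2)
      · exact Or.inr (Or.inr ⟨⟨a, h1, h2⟩, Finset.mem_subtype.mpr haC, rfl⟩)
  · intro D hD
    have hbnot : b ∉ insert t (D.image Subtype.val) := by
      simp only [Finset.mem_insert, Finset.mem_image, not_or]
      exact ⟨hbt, fun ⟨c, _, hc⟩ => c.2.1 hc⟩
    have htnot : t ∉ D.image Subtype.val := by
      simp only [Finset.mem_image, not_exists]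
      rintro c ⟨_, hc⟩
      exact c.2.2 hc
    rw [Finset.card_insert_of_notMem hbnot, Finset.card_insert_of_notMem htnot,
      Finset.card_image_of_injective _ Subtype.val_injective]
    simp only [pow_succ]
    ring

end CF

section Subrack

variable {G : Type*} [Group G] (X : Set G)

local notation "Zs" => X ∩ (Subgroup.center G : Set G)
local notation "Ys" => X \ (X ∩ (Subgroup.center G : Set G))

lemma conj_central {z : G} (hz : z ∈ Zs) (g : G) : g * z * g⁻¹ = z := by
  have h := (Subgroup.mem_center_iff.mp hz.2) g
  rw [h]
  group

lemma central_conj {z : G} (hz : z ∈ Zs) (b : G) : z * b * z⁻¹ = b := by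
  have h := (Subgroup.mem_center_iff.mp hz.2) b
  rw [← h]
  group

lemma conj_nc (a : G) {b : G} (hb : b ∉ Subgroup.center G) :
    a * b * a⁻¹ ∉ Subgroup.center G := by
  intro hc
  apply hb
  have hb' : b = a⁻¹ * (a * b * a⁻¹) * a⁻¹⁻¹ := by group
  rw [hb']
  exact Subgroup.Normal.conj_mem inferInstance _ hc a⁻¹

lemma subrack_diff (hX : ∀ a ∈ X, ∀ g : G, g * a * g⁻¹ ∈ X) {S : Set G}
    (hS : IsSubrackOf13 X S) : IsSubrackOf13 Ys (S \ Zs) := by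
  constructor
  · exact Set.diff_subset_diff_left hS.1
  · rintro a ⟨haS, haZ⟩ b ⟨hbS, hbZ⟩
    refine ⟨hS.2 a haS b hbS, ?_⟩
    intro hmem
    have hbnc : b ∉ Subgroup.center G := fun h => hbZ ⟨hS.1 hbS, h⟩
    exact conj_nc a hbnc hmem.2

lemma subrack_union (F : Set G) (hF : F ⊆ Zs) {T : Set G}
    (hT : IsSubrackOf13 Ys T) : IsSubrackOf13 X (F ∪ T) := by
  constructor
  · intro g hg
    rcases hg with hg | hg
    · exact (hF hg).1
    · exact (hT.1 hg).1
  · intro a ha b hb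
    rcases hb with hb | hb
    · rw [conj_central X (hF hb) a]
      exact Or.inl hb
    · rcases ha with ha | ha
      · rw [central_conj X (hF ha) b]
        exact Or.inr hb
      · exact Or.inr (hT.2 a ha b hb)

/-- The subrack lattice of `X` decomposes as a product. -/
noncomputable def subrackIso [Finite G] (hX : ∀ a ∈ X, ∀ g : G, g * a * g⁻¹ ∈ X) :
    {S : Set G // IsSubrackOf13 X S} ≃o
      Finset ↥Zs × {T : Set G // IsSubrackOf13 Ys T} := by
  letI := Fintype.ofFinite ↥Zs
  classical
  refine
    { toFun := fun S =>
        (Finset.univ.filter (fun z : ↥Zs => (z : G) ∈ S.1),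
          ⟨S.1 \ Zs, subrack_diff X hX S.2⟩),
      invFun := fun p =>
        ⟨(Subtype.val '' (p.1 : Set ↥Zs)) ∪ p.2.1,
          subrack_union X _ (by rintro g ⟨z, _, rfl⟩; exact z.2) p.2.2⟩,
      left_inv := ?_, right_inv := ?_, map_rel_iff' := ?_ }
  · intro S
    apply Subtype.ext
    dsimp only
    ext g
    simp only [Set.mem_union, Set.mem_image, Finset.mem_coe, Finset.mem_filter,
      Finset.mem_univ, true_and, Set.mem_diff]
    constructor
    · rintro (⟨z, hz, rfl⟩ | hg)
      · exact hz
      · exact hg.1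
    · intro hg
      by_cases hZ : g ∈ Zs
      · exact Or.inl ⟨⟨g, hZ⟩, hg, rfl⟩
      · exact Or.inr ⟨hg, hZ⟩
  · rintro ⟨F, T⟩
    dsimp only
    refine Prod.ext ?_ (Subtype.ext ?_)
    · ext z
      simp only [Finset.mem_filter, Finset.mem_univ, true_and, Set.mem_union,
        Set.mem_image, Finset.mem_coe]
      constructor
      · rintro (⟨w, hw, hwz⟩ | hzT)
        · rwa [← Subtype.val_injective hwz]
        · exact absurd z.2 (T.2.1 hzT).2
      · intro hz
        exact Or.inl ⟨z, hz, rfl⟩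
    · dsimp only
      ext g
      simp only [Set.mem_diff, Set.mem_union, Set.mem_image, Finset.mem_coe]
      constructor
      · rintro ⟨⟨z, _, rfl⟩ | hgT, hgZ⟩
        · exact absurd z.2 hgZ
        · exact hgT
      · intro hg
        exact ⟨Or.inr hg, (T.2.1 hg).2⟩
  · rintro ⟨S, hS⟩ ⟨S', hS'⟩
    simp only [Equiv.coe_fn_mk, Prod.mk_le_mk]
    constructor
    · rintro ⟨h1, h2⟩ g hg
      by_cases hZ : g ∈ Zs
      · have : (⟨g, hZ⟩ : ↥Zs) ∈ Finset.univ.filter (fun z : ↥Zs => (z : G) ∈ S) := by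
          simp [hg]
        have := h1 this
        simpa using this
      · have : g ∈ S' \ Zs := h2 (⟨hg, hZ⟩ : g ∈ S \ Zs)
        exact this.1
    · intro h
      constructor
      · intro z hz
        rw [Finset.mem_filter] at hz ⊢
        exact ⟨hz.1, h hz.2⟩
      · exact Set.diff_subset_diff_left h

lemma subrackIso_fst_mem [Finite G] (hX : ∀ a ∈ X, ∀ g : G, g * a * g⁻¹ ∈ X)
    (S : {S : Set G // IsSubrackOf13 X S}) (z : ↥Zs) :
    z ∈ (subrackIso X hX S).1 ↔ (z : G) ∈ S.1 := by
  simp [subrackIso]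

lemma subrackIso_snd [Finite G] (hX : ∀ a ∈ X, ∀ g : G, g * a * g⁻¹ ∈ X)
    (S : {S : Set G // IsSubrackOf13 X S}) :
    ((subrackIso X hX S).2 : Set G) = S.1 \ Zs := rfl

end Subrack

def nestIso {β : Type*} [PartialOrder β] (P : β → Prop) {b t : β} (hb : P b) (ht : P t) :
    {x : β // P x ∧ x ≠ b ∧ x ≠ t} ≃o {a : {x : β // P x} // a ≠ ⟨b, hb⟩ ∧ a ≠ ⟨t, ht⟩} :=
  { toFun := fun x => ⟨⟨x.1, x.2.1⟩, ⟨fun h => x.2.2.1 (congrArg Subtype.val h),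
      fun h => x.2.2.2 (congrArg Subtype.val h)⟩⟩,
    invFun := fun a => ⟨a.1.1, ⟨a.1.2, fun h => a.2.1 (Subtype.ext h),
      fun h => a.2.2 (Subtype.ext h)⟩⟩,
    left_inv := fun _ => rfl, right_inv := fun _ => rfl,
    map_rel_iff' := Iff.rfl }

/-- Let `G` be a finite group, `X ⊆ G` a conjugation rack, and
`Z = X ∩ Z(G)`, with `Z` and `X \ Z` both nonempty.  Then the reduced Euler
characteristic of the order complex of the poset of nonempty proper subracks of `X`
equals `(-1)^|Z|` times that of the poset of nonempty proper subracks of `X \ Z`. -/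
theorem stmt_13 {G : Type*} [Group G] [Fintype G] (X : Set G)
    (hX : ∀ a ∈ X, ∀ g : G, g * a * g⁻¹ ∈ X)
    (hZ : (X ∩ (Subgroup.center G : Set G)).Nonempty)
    (hY : (X \ (X ∩ (Subgroup.center G : Set G))).Nonempty) :
    redEuler13 {S : Set G // IsSubrackOf13 X S ∧ S ≠ ∅ ∧ S ≠ X} =
      (-1 : ℤ) ^ (Nat.card (X ∩ (Subgroup.center G : Set G) : Set G)) *
        redEuler13 {S : Set G //
          IsSubrackOf13 (X \ (X ∩ (Subgroup.center G : Set G))) S ∧ S ≠ ∅ ∧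
            S ≠ X \ (X ∩ (Subgroup.center G : Set G))} := by
  classical
  letI : Fintype ↥(X ∩ (Subgroup.center G : Set G)) := Fintype.ofFinite _
  obtain ⟨z0, hz0⟩ := hZ
  obtain ⟨y0, hy0⟩ := hY
  have hXsub : IsSubrackOf13 X X := ⟨subset_rfl, fun a _ b hb => hX b hb a⟩
  have hEsubX : IsSubrackOf13 X (∅ : Set G) := ⟨Set.empty_subset _, by simp⟩
  have hEsubY : IsSubrackOf13 (X \ (X ∩ (Subgroup.center G : Set G))) (∅ : Set G) :=
    ⟨Set.empty_subset _, by simp⟩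
  have hYsub : IsSubrackOf13 (X \ (X ∩ (Subgroup.center G : Set G)))
      (X \ (X ∩ (Subgroup.center G : Set G))) := by
    refine ⟨subset_rfl, ?_⟩
    rintro a ⟨haX, haZ⟩ b ⟨hbX, hbZ⟩
    refine ⟨hX b hbX a, fun hc => ?_⟩
    have hbnc : b ∉ Subgroup.center G := fun h => hbZ ⟨hbX, h⟩
    exact conj_nc a hbnc hc.2
  have hne1 : (⟨∅, hEsubX⟩ : {S : Set G // IsSubrackOf13 X S}) ≠ ⟨X, hXsub⟩ := by
    intro h
    have h' : (∅ : Set G) = X := Subtype.mk_eq_mk.mp h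
    rw [← h'] at hz0
    exact hz0.1
  have hne2 : (⟨∅, hEsubY⟩ :
      {T : Set G // IsSubrackOf13 (X \ (X ∩ (Subgroup.center G : Set G))) T}) ≠
      ⟨X \ (X ∩ (Subgroup.center G : Set G)), hYsub⟩ := by
    intro h
    have h' : (∅ : Set G) = X \ (X ∩ (Subgroup.center G : Set G)) := Subtype.mk_eq_mk.mp h
    rw [← h'] at hy0
    exact hy0
  have hb1 : ∀ a : {S : Set G // IsSubrackOf13 X S}, (⟨∅, hEsubX⟩ :
      {S : Set G // IsSubrackOf13 X S}) ≤ a :=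
    fun a => Subtype.mk_le_mk.mpr (Set.empty_subset _)
  have ht1 : ∀ a : {S : Set G // IsSubrackOf13 X S}, a ≤ ⟨X, hXsub⟩ :=
    fun a => a.2.1
  have hb2 : ∀ a : {T : Set G // IsSubrackOf13 (X \ (X ∩ (Subgroup.center G : Set G))) T},
      (⟨∅, hEsubY⟩ : {T : Set G // IsSubrackOf13 (X \ (X ∩ (Subgroup.center G : Set G))) T}) ≤ a :=
    fun a => Subtype.mk_le_mk.mpr (Set.empty_subset _)
  have ht2 : ∀ a : {T : Set G // IsSubrackOf13 (X \ (X ∩ (Subgroup.center G : Set G))) T},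
      a ≤ ⟨X \ (X ∩ (Subgroup.center G : Set G)), hYsub⟩ :=
    fun a => a.2.1
  have E1 : redEuler13 {S : Set G // IsSubrackOf13 X S ∧ S ≠ ∅ ∧ S ≠ X} =
      -cf (⟨∅, hEsubX⟩ : {S : Set G // IsSubrackOf13 X S}) ⟨X, hXsub⟩ :=
    (redEuler_congr (nestIso _ hEsubX hXsub)).trans
      (redEuler_proper _ _ hne1 hb1 ht1)
  have E2 : redEuler13 {S : Set G //
        IsSubrackOf13 (X \ (X ∩ (Subgroup.center G : Set G))) S ∧ S ≠ ∅ ∧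
          S ≠ X \ (X ∩ (Subgroup.center G : Set G))} =
      -cf (⟨∅, hEsubY⟩ :
          {T : Set G // IsSubrackOf13 (X \ (X ∩ (Subgroup.center G : Set G))) T})
        ⟨X \ (X ∩ (Subgroup.center G : Set G)), hYsub⟩ :=
    (redEuler_congr (nestIso _ hEsubY hYsub)).trans
      (redEuler_proper _ _ hne2 hb2 ht2)
  have he2b : subrackIso X hX ⟨∅, hEsubX⟩ =
      ((∅ : Finset ↥(X ∩ (Subgroup.center G : Set G))), ⟨∅, hEsubY⟩) := by
    refine Prod.ext ?_ (Subtype.ext ?_)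
    · ext z
      rw [subrackIso_fst_mem]
      simp
    · rw [subrackIso_snd]
      simp
  have he2t : subrackIso X hX ⟨X, hXsub⟩ =
      ((Finset.univ : Finset ↥(X ∩ (Subgroup.center G : Set G))),
        ⟨X \ (X ∩ (Subgroup.center G : Set G)), hYsub⟩) := by
    refine Prod.ext ?_ (Subtype.ext ?_)
    · ext z
      rw [subrackIso_fst_mem]
      simp [z.2.1]
    · rw [subrackIso_snd]
  have E3 : cf (⟨∅, hEsubX⟩ : {S : Set G // IsSubrackOf13 X S}) ⟨X, hXsub⟩ =
      -(cf (∅ : Finset ↥(X ∩ (Subgroup.center G : Set G))) Finset.univ *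
        cf (⟨∅, hEsubY⟩ :
            {T : Set G // IsSubrackOf13 (X \ (X ∩ (Subgroup.center G : Set G))) T})
          ⟨X \ (X ∩ (Subgroup.center G : Set G)), hYsub⟩) := by
    rw [cf_congr (subrackIso X hX), he2b, he2t]
    exact cf_prod _ _ _ _ (Finset.le_iff_subset.mpr (Finset.empty_subset _))
      (Subtype.mk_le_mk.mpr (Set.empty_subset _))
  have E4 : cf (∅ : Finset ↥(X ∩ (Subgroup.center G : Set G))) Finset.univ =
      -(-1 : ℤ) ^ (Nat.card (X ∩ (Subgroup.center G : Set G) : Set G)) := by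
    rw [cf_boolean]
    simp [Nat.card_eq_fintype_card]
  rw [E1, E2, E3, E4]
  ring
end

section
/- Let P be a finite poset and x a minimal element of P. Suppose the automorphism group of P acts transitively on the set of minimal elements of P. Then P is graded (all maximal chains of P have the same length) if and only if the subposet P_{≥x} = {y ∈ P : y ≥ x} is graded. -/
/-- A finite poset is graded (pure) if all of its maximal chains have the same
cardinality (equivalently, the same length). -/
def IsGraded16 (P : Type*) [PartialOrder P] [Finite P] : Prop :=
  letI := Fintype.ofFinite P
  ∀ C D : Finset P,
    Maximal (fun E : Finset P => IsChain (· ≤ ·) (E : Set P)) C →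
    Maximal (fun E : Finset P => IsChain (· ≤ ·) (E : Set P)) D →
    C.card = D.card

section Aux

variable {P : Type*} [PartialOrder P]

/-- Abbreviation for the maximal-chain predicate used in `IsGraded16`. -/
def MaxChain16 (C : Finset P) : Prop :=
  Maximal (fun E : Finset P => IsChain (· ≤ ·) (E : Set P)) C

lemma maxchain_nonempty [Nonempty P] {C : Finset P} (hC : MaxChain16 C) :
    C.Nonempty := by
  classical
  rcases C.eq_empty_or_nonempty with h | h
  · exfalso
    obtain ⟨a⟩ := ‹Nonempty P›
    have hch : IsChain (· ≤ ·) (({a} : Finset P) : Set P) := by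
      simp only [Finset.coe_singleton]
      exact Set.subsingleton_singleton.isChain
    have := hC.2 hch (by simp [h])
    have := this (Finset.mem_singleton_self a)
    simp [h] at this
  · exact h

lemma maxchain_exists_min {C : Finset P} (hC : MaxChain16 C) (hne : C.Nonempty) :
    ∃ m ∈ C, ∀ c ∈ C, m ≤ c := by
  obtain ⟨m, hm, hmin⟩ := C.exists_minimal hne
  refine ⟨m, hm, fun c hc => ?_⟩
  rcases eq_or_ne m c with rfl | hne'
  · exact le_rfl
  · rcases hC.1 hm hc hne' with h | h
    · exact h
    · exact absurd (hmin hc h) (lt_of_le_of_ne h hne'.symm).not_ge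

lemma maxchain_min_isMin {C : Finset P} (hC : MaxChain16 C) {m : P} (hm : m ∈ C)
    (hmin : ∀ c ∈ C, m ≤ c) : IsMin m := by
  classical
  intro p hp
  have hchain : IsChain (· ≤ ·) ((insert p C : Finset P) : Set P) := by
    intro a ha b hb hab
    simp only [Finset.coe_insert, Set.mem_insert_iff, Finset.mem_coe] at ha hb
    rcases ha with rfl | ha <;> rcases hb with rfl | hb
    · exact absurd rfl hab
    · exact Or.inl (hp.trans (hmin _ hb))
    · exact Or.inr (hp.trans (hmin _ ha))
    · exact hC.1 ha hb hab
  have hsub := hC.2 hchain (Finset.subset_insert _ _)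
  exact hmin p (hsub (Finset.mem_insert_self _ _))

lemma maxchain_map (e : P ≃o P) {C : Finset P} (hC : MaxChain16 C) :
    MaxChain16 (C.map e.toEquiv.toEmbedding) := by
  constructor
  · show IsChain (· ≤ ·) ((C.map e.toEquiv.toEmbedding : Finset P) : Set P)
    simp only [Finset.coe_map]
    exact hC.1.image_of_map_rel _ _ _ (fun a b h => e.monotone h)
  · intro E hE hCE
    intro p hp
    -- pull E back via e.symm
    have hE' : IsChain (· ≤ ·) ((E.map e.symm.toEquiv.toEmbedding : Finset P) : Set P) := by
      rw [Finset.coe_map]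
      exact hE.image_of_map_rel _ _ _ (fun a b h => e.symm.monotone h)
    have hCE' : C ⊆ E.map e.symm.toEquiv.toEmbedding := by
      intro c hc
      simp only [Finset.mem_map, Equiv.coe_toEmbedding]
      exact ⟨e c, hCE (Finset.mem_map_of_mem _ hc), by simp⟩
    have hsub := hC.2 hE' hCE'
    have : e.symm p ∈ C := hsub (by
      simp only [Finset.mem_map, Equiv.coe_toEmbedding]
      exact ⟨p, hp, rfl⟩)
    simp only [Finset.mem_map, Equiv.coe_toEmbedding]
    exact ⟨e.symm p, this, by simp⟩

variable {x : P}

lemma bot_mem_maxchain {D : Finset {y : P // x ≤ y}} (hD : MaxChain16 D) :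
    (⟨x, le_rfl⟩ : {y : P // x ≤ y}) ∈ D := by
  classical
  set b : {y : P // x ≤ y} := ⟨x, le_rfl⟩ with hb
  have hchain : IsChain (· ≤ ·) ((insert b D : Finset {y : P // x ≤ y}) : Set {y : P // x ≤ y}) := by
    intro a ha c hc hac
    simp only [Finset.coe_insert, Set.mem_insert_iff, Finset.mem_coe] at ha hc
    rcases ha with rfl | ha <;> rcases hc with rfl | hc
    · exact absurd rfl hac
    · exact Or.inl c.2
    · exact Or.inr a.2
    · exact hD.1 ha hc hac
  exact hD.2 hchain (Finset.subset_insert _ _) (Finset.mem_insert_self _ _)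

lemma maxchain_up (hx : IsMin x) {D : Finset {y : P // x ≤ y}} (hD : MaxChain16 D) :
    MaxChain16 (D.map (Function.Embedding.subtype _)) := by
  classical
  constructor
  · show IsChain (· ≤ ·) ((D.map (Function.Embedding.subtype _) : Finset P) : Set P)
    simp only [Finset.coe_map, Function.Embedding.coe_subtype]
    exact hD.1.image_of_map_rel _ _ (fun a : {y : P // x ≤ y} => (a : P)) (fun a b h => h)
  · intro E hE hDE
    have hxE : x ∈ E := hDE (by
      simp only [Finset.mem_map, Function.Embedding.coe_subtype]
      exact ⟨⟨x, le_rfl⟩, bot_mem_maxchain hD, rfl⟩)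
    -- every element of E is ≥ x
    have hEx : ∀ p ∈ E, x ≤ p := by
      intro p hp
      rcases eq_or_ne p x with rfl | hne
      · exact le_rfl
      rcases hE hxE hp (Ne.symm hne) with h | h
      · exact h
      · exact hx h
    -- lift E to the subtype
    have hchain' : IsChain (· ≤ ·) ((E.subtype (fun y => x ≤ y) : Finset {y : P // x ≤ y}) : Set {y : P // x ≤ y}) := by
      intro a ha c hc hac
      simp only [Finset.mem_coe, Finset.mem_subtype] at ha hc
      have := hE ha hc (fun h => hac (Subtype.ext h))
      exact this
    have hDsub : D ⊆ E.subtype (fun y => x ≤ y) := by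
      intro d hd
      rw [Finset.mem_subtype]
      exact hDE (by
        simp only [Finset.mem_map, Function.Embedding.coe_subtype]
        exact ⟨d, hd, rfl⟩)
    have hsub := hD.2 hchain' hDsub
    intro p hp
    have hxp : x ≤ p := hEx p hp
    have : (⟨p, hxp⟩ : {y : P // x ≤ y}) ∈ D := hsub (by simpa [Finset.mem_subtype])
    simp only [Finset.mem_map, Function.Embedding.coe_subtype]
    exact ⟨⟨p, hxp⟩, this, rfl⟩

lemma maxchain_down (hx : IsMin x) {C : Finset P} (hC : MaxChain16 C) (hxC : x ∈ C) :
    ∃ D : Finset {y : P // x ≤ y}, MaxChain16 D ∧ D.card = C.card := by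
  classical
  have hCx : ∀ p ∈ C, x ≤ p := by
    intro p hp
    rcases eq_or_ne p x with rfl | hne
    · exact le_rfl
    rcases hC.1 hxC hp (Ne.symm hne) with h | h
    · exact h
    · exact hx h
  refine ⟨C.subtype (fun y => x ≤ y), ?_, ?_⟩
  · constructor
    · intro a ha c hcmem hac
      simp only [Finset.mem_coe, Finset.mem_subtype] at ha hcmem
      exact hC.1 ha hcmem (fun h => hac (Subtype.ext h))
    · intro F hF hCF
      have hFchain : IsChain (· ≤ ·) ((F.map (Function.Embedding.subtype _) : Finset P) : Set P) := by
        simp only [Finset.coe_map, Function.Embedding.coe_subtype]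
        exact hF.image_of_map_rel _ _ (fun a : {y : P // x ≤ y} => (a : P)) (fun a b h => h)
      have hCsub : C ⊆ F.map (Function.Embedding.subtype _) := by
        intro c hcmem
        simp only [Finset.mem_map, Function.Embedding.coe_subtype]
        exact ⟨⟨c, hCx c hcmem⟩, hCF (by simpa [Finset.mem_subtype]), rfl⟩
      have hsub := hC.2 hFchain hCsub
      intro q hq
      rw [Finset.mem_subtype]
      exact hsub (by
        simp only [Finset.mem_map, Function.Embedding.coe_subtype]
        exact ⟨q, hq, rfl⟩)
  · have : (C.subtype (fun y => x ≤ y)).map (Function.Embedding.subtype _)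
        = C.filter (fun y => x ≤ y) := Finset.subtype_map _
    have hfilter : C.filter (fun y => x ≤ y) = C := Finset.filter_true_of_mem hCx
    calc (C.subtype (fun y => x ≤ y)).card
        = ((C.subtype (fun y => x ≤ y)).map (Function.Embedding.subtype _)).card :=
          (Finset.card_map _).symm
      _ = C.card := by rw [this, hfilter]

end Aux

/-- Let `P` be a finite poset, `x` a minimal element of `P`, and suppose
the automorphism group of `P` acts transitively on the minimal elements of `P`.  Then
`P` is graded if and only if the subposet `P_{≥ x} = {y : y ≥ x}` is graded. -/
theorem stmt_16 {P : Type*} [PartialOrder P] [Finite P] (x : P) (hx : IsMin x)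
    (htrans : ∀ y z : P, IsMin y → IsMin z → ∃ e : P ≃o P, e y = z) :
    IsGraded16 P ↔ IsGraded16 {y : P // x ≤ y} := by
  have : Nonempty P := ⟨x⟩
  constructor
  · intro hP D1 D2 hD1 hD2
    have h1 : MaxChain16 (D1.map (Function.Embedding.subtype _)) := maxchain_up hx hD1
    have h2 : MaxChain16 (D2.map (Function.Embedding.subtype _)) := maxchain_up hx hD2
    have := hP _ _ h1 h2
    simpa [Finset.card_map] using this
  · intro hQ C1 C2 hC1 hC2
    -- for each maximal chain, get a corresponding maximal chain in the subtype
    have key : ∀ C : Finset P, MaxChain16 C →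
        ∃ D : Finset {y : P // x ≤ y}, MaxChain16 D ∧ D.card = C.card := by
      intro C hC
      obtain ⟨m, hm, hmin⟩ := maxchain_exists_min hC (maxchain_nonempty hC)
      have hmMin : IsMin m := maxchain_min_isMin hC hm hmin
      obtain ⟨e, he⟩ := htrans m x hmMin hx
      have hC' : MaxChain16 (C.map e.toEquiv.toEmbedding) := maxchain_map e hC
      have hxC' : x ∈ C.map e.toEquiv.toEmbedding := by
        simp only [Finset.mem_map, Equiv.coe_toEmbedding]
        exact ⟨m, hm, he⟩
      obtain ⟨D, hD, hcard⟩ := maxchain_down hx hC' hxC'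
      exact ⟨D, hD, by rw [hcard, Finset.card_map]⟩
    obtain ⟨D1, hD1, hcard1⟩ := key C1 hC1
    obtain ⟨D2, hD2, hcard2⟩ := key C2 hC2
    rw [← hcard1, ← hcard2]
    exact hQ D1 D2 hD1 hD2
end

section
/- Let T be the conjugacy class of transpositions in the symmetric group S_4. Then T is closed under conjugation, (T, ▷) with a ▷ b = a*b*a⁻¹ is a quandle with 6 elements, and its subrack lattice R(T) (all subsets of T closed under the conjugation operation, ordered by inclusion) is isomorphic as a lattice to the partition lattice Π_4 of set partitions of {1,2,3,4} ordered by refinement. -/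
open Equiv

instance instDecIsSwap : DecidablePred (Equiv.Perm.IsSwap (α := Fin 4)) :=
  fun σ => decidable_of_iff (∃ x y, x ≠ y ∧ σ = Equiv.swap x y) Iff.rfl

abbrev Sub4 := {S : Set (Equiv.Perm (Fin 4)) // S ⊆ {σ | σ.IsSwap} ∧
          ∀ a ∈ S, ∀ b ∈ S, a * b * a⁻¹ ∈ S}

def toSetoid (S : Sub4) : Setoid (Fin 4) where
  r i j := i = j ∨ Equiv.swap i j ∈ S.1
  iseqv := by
    constructor
    · intro x; exact Or.inl rfl
    · intro x y h; rcases h with h | h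
      · exact Or.inl h.symm
      · exact Or.inr (by rwa [Equiv.swap_comm])
    · rintro x y z (rfl | hxy) h
      · exact h
      · rcases h with rfl | hyz
        · exact Or.inr hxy
        · by_cases hzy : z = y
          · subst hzy; exact Or.inr hxy
          · by_cases hzx : z = x
            · exact Or.inl hzx.symm
            · right
              have := S.2.2 _ hxy _ hyz
              rwa [← Equiv.swap_apply_apply, Equiv.swap_apply_right,
                Equiv.swap_apply_of_ne_of_ne hzx hzy] at this

def toSub (s : Setoid (Fin 4)) : Sub4 :=
  ⟨{σ | ∃ i j : Fin 4, i ≠ j ∧ s.r i j ∧ σ = Equiv.swap i j}, by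
    constructor
    · rintro σ ⟨i, j, hij, _, rfl⟩; exact ⟨i, j, hij, rfl⟩
    · rintro a ⟨i, j, hij, hrij, rfl⟩ b ⟨k, l, hkl, hrkl, rfl⟩
      refine ⟨Equiv.swap i j k, Equiv.swap i j l, fun h => hkl ((Equiv.swap i j).injective h),
        ?_, (Equiv.swap_apply_apply _ _ _).symm⟩
      have key : ∀ m : Fin 4, s.r (Equiv.swap i j m) m := by
        intro m
        rcases eq_or_ne m i with rfl | hm
        · simpa using s.symm' hrij
        · rcases eq_or_ne m j with rfl | hm'
          · simpa using hrij
          · simpa [Equiv.swap_apply_of_ne_of_ne hm hm'] using s.refl m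
      exact s.trans' (key k) (s.trans' hrkl (s.symm' (key l)))⟩

theorem left_inv' (S : Sub4) : toSub (toSetoid S) = S := by
  apply Subtype.ext
  ext σ
  constructor
  · rintro ⟨i, j, hij, (h | h), rfl⟩
    · exact absurd h hij
    · exact h
  · intro hσ
    rcases S.2.1 hσ with ⟨i, j, hij, rfl⟩
    exact ⟨i, j, hij, Or.inr hσ, rfl⟩

theorem right_inv' (s : Setoid (Fin 4)) : toSetoid (toSub s) = s := by
  apply Setoid.ext
  intro a b
  constructor
  · rintro (rfl | ⟨i, j, hij, hrij, hs⟩)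
    · exact s.refl _
    · -- swap a b = swap i j
      have ha : Equiv.swap a b a = Equiv.swap i j a := by rw [hs]
      rw [Equiv.swap_apply_left] at ha
      by_cases hai : a = i
      · subst hai; rw [Equiv.swap_apply_left] at ha; subst ha; exact hrij
      · by_cases haj : a = j
        · subst haj; rw [Equiv.swap_apply_right] at ha; subst ha; exact s.symm' hrij
        · rw [Equiv.swap_apply_of_ne_of_ne hai haj] at ha
          -- then b = a, so refl
          exact ha ▸ s.refl a
  · intro h
    by_cases hab : a = b
    · exact Or.inl hab
    · exact Or.inr ⟨a, b, hab, h, rfl⟩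

theorem mono_toSetoid : Monotone toSetoid := by
  intro S S' hSS'
  rw [Setoid.le_def]
  rintro a b (rfl | h)
  · exact (toSetoid S').refl _
  · exact Or.inr (hSS' h)

theorem mono_toSub : Monotone toSub := by
  intro s s' hss'
  rintro σ ⟨i, j, hij, hrij, rfl⟩
  exact ⟨i, j, hij, hss' hrij, rfl⟩

/-- Let `T` be the set of transpositions in `S₄`.  Then `T` is closed
under conjugation, `(T, ▷)` with `a ▷ b = a * b * a⁻¹` is a quandle with 6 elements,
and its subrack lattice (the subsets of `T` closed under the conjugation operation,
ordered by inclusion) is isomorphic to the partition lattice `Π₄` of set partitions of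
`{1,2,3,4}` ordered by refinement (modelled as the lattice `Setoid (Fin 4)` of
equivalence relations on `Fin 4`). -/
theorem stmt_19 :
    (∀ a ∈ {σ : Equiv.Perm (Fin 4) | σ.IsSwap}, ∀ b ∈ {σ : Equiv.Perm (Fin 4) | σ.IsSwap},
      a * b * a⁻¹ ∈ {σ : Equiv.Perm (Fin 4) | σ.IsSwap}) ∧
    (∀ a ∈ {σ : Equiv.Perm (Fin 4) | σ.IsSwap},
      Set.BijOn (fun b => a * b * a⁻¹) {σ : Equiv.Perm (Fin 4) | σ.IsSwap}
        {σ : Equiv.Perm (Fin 4) | σ.IsSwap}) ∧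
    (∀ a : Equiv.Perm (Fin 4), a * a * a⁻¹ = a) ∧
    Nat.card {σ : Equiv.Perm (Fin 4) | σ.IsSwap} = 6 ∧
    Nonempty
      ({S : Set (Equiv.Perm (Fin 4)) // S ⊆ {σ | σ.IsSwap} ∧
          ∀ a ∈ S, ∀ b ∈ S, a * b * a⁻¹ ∈ S} ≃o Setoid (Fin 4)) := by
  have conj_swap : ∀ a : Equiv.Perm (Fin 4), ∀ b ∈ {σ : Equiv.Perm (Fin 4) | σ.IsSwap},
      a * b * a⁻¹ ∈ {σ : Equiv.Perm (Fin 4) | σ.IsSwap} := by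
    rintro a b ⟨i, j, hij, rfl⟩
    exact ⟨a i, a j, fun h => hij (a.injective h), (Equiv.swap_apply_apply a i j).symm⟩
  refine ⟨fun a _ => conj_swap a, ?_, fun a => mul_inv_cancel_right _ _, ?_, ?_⟩
  · intro a _
    refine ⟨fun b hb => conj_swap a b hb, fun x _ y _ h => ?_, fun b hb => ?_⟩
    · simpa using h
    · refine ⟨a⁻¹ * b * a⁻¹⁻¹, conj_swap a⁻¹ b hb, ?_⟩
      simp [mul_assoc]
  · have h6 : Nat.card {σ : Equiv.Perm (Fin 4) // σ.IsSwap} = 6 := by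
      rw [Nat.card_eq_fintype_card]; decide
    exact h6
  · exact ⟨Equiv.toOrderIso ⟨toSetoid, toSub, left_inv', right_inv'⟩ mono_toSetoid mono_toSub⟩
end
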